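/- arXiv:1705.08076 — 5 statements merged into one kernel-verified Lean document; each statement's English description precedes it below -/
import Mathlib

section
/- Under the 'largest' expert policy, the conditional expectation of the updated threshold satisfies E[V_{t+1} | V_t = v_t] = v_t − (1 − (1−v_t)^c · (1 + c·v_t))/(c+1). -/
open MeasureTheory
open scoped Classical

/-- under the "largest" expert policy, with `c` points drawn
i.i.d. uniformly from `[0,1]`, the expected updated threshold is
`v_t − (1 − (1−v_t)^c (1 + c v_t))/(c+1)`. -/
theorem expected_update_largest_policy
    (c : ℕ) (hc : 0 < c) (vt : ℝ) (hvt : vt ∈ Set.Icc (0 : ℝ) 1) :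
    let P : Measure (Fin c → ℝ) :=
      Measure.pi fun _ => volume.restrict (Set.Icc (0 : ℝ) 1)
    let V : (Fin c → ℝ) → ℝ := fun x =>
      if ∀ i, vt ≤ x i then vt else sSup {y | ∃ i, x i = y ∧ y < vt}
    ∫ x, V x ∂P = vt - (1 - (1 - vt) ^ c * (1 + c * vt)) / (c + 1) := by
  intro P V
  obtain ⟨hvt0, hvt1⟩ := hvt
  haveI : Nonempty (Fin c) := Fin.pos_iff_nonempty.mp hc
  have hne : (Finset.univ : Finset (Fin c)).Nonempty := Finset.univ_nonempty
  set μ : Measure ℝ := volume.restrict (Set.Icc (0 : ℝ) 1) with hμdef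
  haveI hμprob : IsProbabilityMeasure μ := ⟨by simp [hμdef, Real.volume_Icc]⟩
  haveI hPprob : IsProbabilityMeasure P := by
    unfold P; infer_instance
  set g : (Fin c → ℝ) → ℝ := fun x =>
    if ∀ i, vt ≤ x i then vt
    else Finset.univ.sup' hne (fun i => if x i < vt then x i else 0) with hgdef
  have hgmeas : Measurable g := by
    have hA : MeasurableSet {x : Fin c → ℝ | ∀ i, vt ≤ x i} := by
      have : {x : Fin c → ℝ | ∀ i, vt ≤ x i} = ⋂ i, {x | vt ≤ x i} := by
        ext x; simp [Set.mem_iInter]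
      rw [this]
      exact MeasurableSet.iInter fun i =>
        measurableSet_le measurable_const (measurable_pi_apply i)
    have hsup : (fun x : Fin c → ℝ => Finset.univ.sup' hne fun i => if x i < vt then x i else 0)
        = Finset.univ.sup' hne (fun i (x : Fin c → ℝ) => if x i < vt then x i else 0) := by
      funext x; rw [Finset.sup'_apply]
    refine Measurable.ite hA measurable_const ?_
    rw [hsup]
    exact Finset.measurable_sup' hne fun i _ =>
      Measurable.ite (measurableSet_lt (measurable_pi_apply i) measurable_const)
        (measurable_pi_apply i) measurable_const
  -- a.e. every coordinate lies in [0,1]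
  have hae : ∀ᵐ x ∂P, ∀ i, x i ∈ Set.Icc (0:ℝ) 1 := by
    have hfull : P (Set.pi Set.univ fun _ : Fin c => Set.Icc (0:ℝ) 1) = 1 := by
      rw [Measure.pi_pi]
      simp [hμdef, Measure.restrict_apply, Real.volume_Icc]
    have hc0 : P (Set.pi Set.univ fun _ : Fin c => Set.Icc (0:ℝ) 1)ᶜ = 0 :=
      (prob_compl_eq_zero_iff (MeasurableSet.univ_pi fun _ => measurableSet_Icc)).mpr hfull
    rw [ae_iff]
    have heq : {x : Fin c → ℝ | ¬ ∀ i, x i ∈ Set.Icc (0:ℝ) 1}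
        = (Set.pi Set.univ fun _ : Fin c => Set.Icc (0:ℝ) 1)ᶜ := by
      ext x
      simp only [Set.mem_setOf_eq, Set.mem_compl_iff, Set.mem_pi, Set.mem_univ, true_implies]
    rw [heq]; exact hc0
  have hg_nn_pt : ∀ x : Fin c → ℝ, (∀ i, x i ∈ Set.Icc (0:ℝ) 1) → 0 ≤ g x := by
    intro x hx
    simp only [hgdef]
    split_ifs with h
    · exact hvt0
    · have i : Fin c := Classical.arbitrary _
      refine le_trans ?_ (Finset.le_sup' _ (Finset.mem_univ i))
      split_ifs
      · exact (hx i).1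
      · exact le_refl 0
  have hVg : V =ᵐ[P] g := by
    filter_upwards [hae] with x hx
    simp only [V, hgdef]
    by_cases h : ∀ i, vt ≤ x i
    · simp [h]
    · simp only [h, if_false]
      push_neg at h
      obtain ⟨j, hj⟩ := h
      have hSne : {y | ∃ i, x i = y ∧ y < vt}.Nonempty := ⟨x j, j, rfl, hj⟩
      have hSbdd : BddAbove {y | ∃ i, x i = y ∧ y < vt} :=
        ⟨vt, by rintro y ⟨i, rfl, hy⟩; exact hy.le⟩
      apply le_antisymm
      · apply csSup_le hSne
        rintro y ⟨i, rfl, hy⟩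
        refine le_trans ?_ (Finset.le_sup' _ (Finset.mem_univ i))
        rw [if_pos hy]
      · apply Finset.sup'_le
        intro i _
        by_cases hi : x i < vt
        · rw [if_pos hi]; exact le_csSup hSbdd ⟨i, rfl, hi⟩
        · rw [if_neg hi]
          exact le_trans (hx j).1 (le_csSup hSbdd ⟨j, rfl, hj⟩)
  have hgb : ∀ x, g x ≤ vt := by
    intro x
    simp only [hgdef]
    split_ifs with h
    · exact le_refl vt
    · apply Finset.sup'_le
      intro i _
      split_ifs with hi
      · exact hi.le
      · exact hvt0
  have hg_nn : 0 ≤ᵐ[P] g := by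
    filter_upwards [hae] with x hx using hg_nn_pt x hx
  have hg_int : Integrable g P := by
    refine (integrable_const (1:ℝ)).mono' hgmeas.aestronglyMeasurable ?_
    filter_upwards [hae] with x hx
    rw [Real.norm_eq_abs, abs_le]
    exact ⟨by linarith [hg_nn_pt x hx], le_trans (hgb x) hvt1⟩
  have key : ∫ x, V x ∂P = ∫ t in Set.Ioi (0:ℝ),
      ENNReal.toReal (P {a | t < g a}) := by
    rw [integral_congr_ae hVg]
    exact hg_int.integral_eq_integral_meas_lt hg_nn
  -- compute the measure of the superlevel sets
  have hmeas_level : ∀ t ∈ Set.Ioi (0:ℝ),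
      ENNReal.toReal (P {a | t < g a})
        = Set.indicator (Set.Ioo 0 vt)
            (fun t => (1 - vt)^c + (1 - (1 - vt + t)^c)) t := by
    intro t ht
    rw [Set.mem_Ioi] at ht
    by_cases htv : t < vt
    · rw [Set.indicator_of_mem (Set.mem_Ioo.mpr ⟨ht, htv⟩)]
      set A : Set (Fin c → ℝ) := Set.pi Set.univ fun _ : Fin c => Set.Ici vt with hAdef
      set B : Set (Fin c → ℝ) := (Set.pi Set.univ fun _ : Fin c => (Set.Ioo t vt)ᶜ)ᶜ with hBdef
      have hBmeas : MeasurableSet B :=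
        (MeasurableSet.univ_pi fun _ => measurableSet_Ioo.compl).compl
      have hset : {a : Fin c → ℝ | t < g a} = A ∪ B := by
        ext x
        simp only [hAdef, hBdef, Set.mem_setOf_eq, Set.mem_union, Set.mem_pi, Set.mem_univ,
          true_implies, Set.mem_Ici, Set.mem_compl_iff, Set.mem_Ioo, not_forall, not_not,
          hgdef]
        by_cases h : ∀ i, vt ≤ x i
        · simp only [if_pos h]
          exact ⟨fun _ => Or.inl h, fun _ => htv⟩
        · simp only [if_neg h, Finset.lt_sup'_iff, Finset.mem_univ, true_and]
          constructor
          · rintro ⟨i, hi⟩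
            by_cases h2 : x i < vt
            · rw [if_pos h2] at hi
              exact Or.inr ⟨i, ⟨hi, h2⟩⟩
            · rw [if_neg h2] at hi
              exact absurd hi (by linarith)
          · rintro (hA | ⟨i, h1, h2⟩)
            · exact absurd hA h
            · exact ⟨i, by rw [if_pos h2]; exact h1⟩
      have hdisj : Disjoint A B := by
        rw [Set.disjoint_left]
        intro x hxA hxB
        simp only [hAdef, hBdef, Set.mem_pi, Set.mem_univ, true_implies, Set.mem_Ici,
          Set.mem_compl_iff, Set.mem_Ioo, not_forall, not_not] at hxA hxB
        obtain ⟨i, _, h2⟩ := hxB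
        exact absurd (hxA i) (not_le.mpr h2)
      have h1vt : (0:ℝ) ≤ 1 - vt + t := by linarith
      have h1vt1 : (1:ℝ) - vt + t ≤ 1 := by linarith
      have hPA : P A = ENNReal.ofReal ((1 - vt)^c) := by
        rw [hAdef]
        unfold P
        rw [Measure.pi_pi]
        have hμIci : μ (Set.Ici vt) = ENNReal.ofReal (1 - vt) := by
          rw [hμdef, Measure.restrict_apply measurableSet_Ici]
          have hIcap : Set.Ici vt ∩ Set.Icc (0:ℝ) 1 = Set.Icc vt 1 := by
            ext y
            simp only [Set.mem_inter_iff, Set.mem_Ici, Set.mem_Icc]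
            constructor
            · rintro ⟨h1, _, h3⟩; exact ⟨h1, h3⟩
            · rintro ⟨h1, h2⟩; exact ⟨h1, le_trans hvt0 h1, h2⟩
          rw [hIcap, Real.volume_Icc]
        simp only [hμIci, Finset.prod_const, Finset.card_univ, Fintype.card_fin]
        rw [← hμdef, hμIci, ← ENNReal.ofReal_pow (by linarith : (0:ℝ) ≤ 1 - vt)]
      have hPB : P B = ENNReal.ofReal (1 - (1 - vt + t)^c) := by
        have hμIoo : μ (Set.Ioo t vt)ᶜ = ENNReal.ofReal (1 - vt + t) := by
          rw [measure_compl measurableSet_Ioo (measure_ne_top _ _), measure_univ]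
          have hsub : Set.Ioo t vt ⊆ Set.Icc (0:ℝ) 1 := fun y hy =>
            ⟨le_of_lt (lt_trans ht hy.1), le_trans (le_of_lt hy.2) hvt1⟩
          rw [hμdef, Measure.restrict_apply measurableSet_Ioo,
            Set.inter_eq_left.mpr hsub, Real.volume_Ioo]
          have harith : (1:ℝ) - vt + t = 1 - (vt - t) := by ring
          rw [harith, ENNReal.ofReal_sub 1 (by linarith : (0:ℝ) ≤ vt - t),
            ENNReal.ofReal_one]
        rw [hBdef,
          measure_compl (MeasurableSet.univ_pi fun _ => measurableSet_Ioo.compl)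
            (measure_ne_top _ _), measure_univ]
        unfold P
        rw [Measure.pi_pi]
        simp only [hμIoo, Finset.prod_const, Finset.card_univ, Fintype.card_fin]
        rw [← hμdef, hμIoo, ← ENNReal.ofReal_pow h1vt,
          ENNReal.ofReal_sub 1 (pow_nonneg h1vt c), ENNReal.ofReal_one]
      rw [hset, measure_union hdisj hBmeas, hPA, hPB,
        ENNReal.toReal_add ENNReal.ofReal_ne_top ENNReal.ofReal_ne_top,
        ENNReal.toReal_ofReal (pow_nonneg (by linarith) c),
        ENNReal.toReal_ofReal (by nlinarith [pow_le_one₀ h1vt h1vt1 (n := c)])]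
    · rw [Set.indicator_of_notMem (by simp [Set.mem_Ioo, htv])]
      have : {a : Fin c → ℝ | t < g a} = ∅ := by
        ext x
        simp only [Set.mem_setOf_eq, Set.mem_empty_iff_false, iff_false, not_lt]
        exact le_trans (hgb x) (not_lt.mp htv)
      rw [this]
      simp
  rw [key, setIntegral_congr_fun measurableSet_Ioi hmeas_level]
  rw [integral_indicator measurableSet_Ioo, Measure.restrict_restrict measurableSet_Ioo]
  have hinter : Set.Ioo (0:ℝ) vt ∩ Set.Ioi 0 = Set.Ioo 0 vt :=
    Set.inter_eq_left.mpr fun y hy => hy.1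
  rw [hinter, ← integral_Ioc_eq_integral_Ioo, ← intervalIntegral.integral_of_le hvt0]
  have hsplit : Set.EqOn (fun t : ℝ => (1 - vt)^c + (1 - (1 - vt + t)^c))
      (fun t : ℝ => ((1 - vt)^c + 1) - (t + (1 - vt))^c) (Set.uIcc 0 vt) := by
    intro t _; simp only; ring
  have hInt : IntervalIntegrable (fun x : ℝ => (x + (1 - vt))^c) MeasureTheory.volume 0 vt := by
    exact (Continuous.intervalIntegrable (by continuity) _ _)
  rw [intervalIntegral.integral_congr hsplit,
    intervalIntegral.integral_sub intervalIntegrable_const hInt,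
    intervalIntegral.integral_const,
    intervalIntegral.integral_comp_add_right (fun u : ℝ => u ^ c) (1 - vt),
    integral_pow]
  have h01 : vt + (1 - vt) = 1 := by ring
  rw [zero_add, h01, one_pow, smul_eq_mul]
  have hc1 : ((c:ℝ) + 1) ≠ 0 := by positivity
  field_simp
  ring
end

section
/- Under the 'smallest' expert policy, the conditional expectation of the updated threshold satisfies E[V_{t+1} | V_t = v_t] = (1 − (1−v_t)^{c+1})/(c+1). -/
open MeasureTheory
open scoped Classical

private lemma measurable_finset_inf' {α ι : Type*} [MeasurableSpace α]
    (s : Finset ι) (hs : s.Nonempty) (f : ι → α → ℝ) (hf : ∀ i, Measurable (f i)) :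
    Measurable (fun x => s.inf' hs fun i => f i x) := by
  induction hs using Finset.Nonempty.cons_induction with
  | singleton i => simpa using hf i
  | cons a s ha hs' ih =>
      rw [show (fun x => (Finset.cons a s ha).inf' (Finset.cons_nonempty ha) fun i => f i x)
          = (fun x => min (f a x) (s.inf' hs' fun i => f i x)) from
        funext fun x => Finset.inf'_cons (H := hs') (f := fun i => f i x)]
      exact (hf a).min ih

/-- under the "smallest" expert policy, with `c` points drawn
i.i.d. uniformly from `[0,1]`, the expected updated threshold is
`(1 − (1−v_t)^{c+1})/(c+1)`. -/
theorem expected_update_smallest_policy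
    (c : ℕ) (hc : 0 < c) (vt : ℝ) (hvt : vt ∈ Set.Icc (0 : ℝ) 1) :
    let P : Measure (Fin c → ℝ) :=
      Measure.pi fun _ => volume.restrict (Set.Icc (0 : ℝ) 1)
    let V : (Fin c → ℝ) → ℝ := fun x =>
      if ∀ i, vt ≤ x i then vt else sInf {y | ∃ i, x i = y ∧ y < vt}
    ∫ x, V x ∂P = (1 - (1 - vt) ^ (c + 1)) / (c + 1) := by
  intro P V
  obtain ⟨hvt0, hvt1⟩ := hvt
  haveI : Nonempty (Fin c) := ⟨⟨0, hc⟩⟩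
  have hne : (Finset.univ : Finset (Fin c)).Nonempty := Finset.univ_nonempty
  set F : (Fin c → ℝ) → ℝ := fun x => Finset.univ.inf' hne (fun i => min (x i) vt) with hF
  -- V = F everywhere
  have hVF : ∀ x, V x = F x := by
    intro x
    by_cases h : ∀ i, vt ≤ x i
    · simp only [V, if_pos h, hF]
      have : ∀ i ∈ Finset.univ, min (x i) vt = vt := fun i _ => min_eq_right (h i)
      rw [Finset.inf'_congr hne rfl this, Finset.inf'_const]
    · simp only [V, if_neg h]
      push_neg at h
      obtain ⟨i0, hi0⟩ := h
      set T : Finset ℝ := (Finset.univ.filter (fun i => x i < vt)).image x with hT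
      have hTne : T.Nonempty := ⟨x i0, Finset.mem_image.2 ⟨i0, Finset.mem_filter.2 ⟨Finset.mem_univ _, hi0⟩, rfl⟩⟩
      have hSeq : {y | ∃ i, x i = y ∧ y < vt} = ↑T := by
        ext y
        simp only [Set.mem_setOf_eq, hT, Finset.coe_image, Set.mem_image, Finset.mem_coe,
          Finset.mem_filter, Finset.mem_univ, true_and]
        constructor
        · rintro ⟨i, rfl, hlt⟩; exact ⟨i, hlt, rfl⟩
        · rintro ⟨i, hlt, rfl⟩; exact ⟨i, rfl, hlt⟩
      rw [hSeq, hTne.csInf_eq_min']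
      apply le_antisymm
      · apply Finset.le_inf'
        intro i _
        rcases le_or_gt vt (x i) with hle | hlt
        · rw [min_eq_right hle]
          exact le_trans (Finset.min'_le T _ (Finset.mem_image.2 ⟨i0, Finset.mem_filter.2 ⟨Finset.mem_univ _, hi0⟩, rfl⟩)) hi0.le
        · rw [min_eq_left hlt.le]
          exact Finset.min'_le T _ (Finset.mem_image.2 ⟨i, Finset.mem_filter.2 ⟨Finset.mem_univ _, hlt⟩, rfl⟩)
      · obtain ⟨i, hi, hix⟩ := Finset.mem_image.1 (T.min'_mem hTne)
        have hilt : x i < vt := (Finset.mem_filter.1 hi).2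
        calc Finset.univ.inf' hne (fun i => min (x i) vt) ≤ min (x i) vt :=
              Finset.inf'_le _ (Finset.mem_univ i)
          _ = T.min' hTne := by rw [min_eq_left hilt.le, hix]
  have hFmeas : Measurable F :=
    measurable_finset_inf' _ hne _ (fun i => (measurable_pi_apply i).min measurable_const)
  -- a.e. all coordinates lie in [0,1]
  haveI : ∀ i : Fin c, IsProbabilityMeasure ((fun _ : Fin c => volume.restrict (Set.Icc (0:ℝ) 1)) i) := by
    intro i
    constructor
    rw [Measure.restrict_apply MeasurableSet.univ, Set.univ_inter, Real.volume_Icc]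
    norm_num
  haveI : IsProbabilityMeasure P := by
    unfold P; infer_instance
  have hae : ∀ᵐ x ∂P, ∀ i, x i ∈ Set.Icc (0:ℝ) 1 := by
    have hmeas : MeasurableSet (Set.pi Set.univ fun _ : Fin c => Set.Icc (0:ℝ) 1) :=
      MeasurableSet.univ_pi fun _ => measurableSet_Icc
    have hP1 : P (Set.pi Set.univ fun _ : Fin c => Set.Icc (0:ℝ) 1) = 1 := by
      rw [Measure.pi_pi]
      simp [Measure.restrict_apply, Real.volume_Icc]
    have h0 : P (Set.pi Set.univ fun _ : Fin c => Set.Icc (0:ℝ) 1)ᶜ = 0 := by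
      rw [measure_compl hmeas (measure_ne_top _ _), hP1, measure_univ, tsub_self]
    rw [ae_iff]
    refine measure_mono_null ?_ h0
    intro x hx
    simp only [Set.mem_compl_iff, Set.mem_pi, Set.mem_univ, true_implies]
    simp only [Set.mem_setOf_eq] at hx
    push_neg at hx ⊢
    exact hx
  have hFnn : 0 ≤ᵐ[P] F := by
    filter_upwards [hae] with x hx
    apply Finset.le_inf'
    intro i _
    exact le_min (hx i).1 hvt0
  have hFbd : ∀ᵐ x ∂P, ‖F x‖ ≤ 1 := by
    filter_upwards [hae, hFnn] with x hx hnn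
    simp only [Pi.zero_apply] at hnn
    rw [Real.norm_eq_abs, abs_le]
    constructor
    · linarith
    · calc F x ≤ min (x ⟨0, hc⟩) vt := Finset.inf'_le _ (Finset.mem_univ _)
        _ ≤ vt := min_le_right _ _
        _ ≤ 1 := hvt1
  have hFint : Integrable F P :=
    Integrable.mono' (integrable_const 1) hFmeas.aestronglyMeasurable hFbd
  have key := hFint.integral_eq_integral_meas_lt hFnn
  have hVint : ∫ x, V x ∂P = ∫ x, F x ∂P := by
    congr 1; funext x; exact hVF x
  rw [hVint, key]
  -- compute the tail measures
  have htail : ∀ t ∈ Set.Ioi (0:ℝ),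
      ENNReal.toReal (P {a | t < F a}) = Set.indicator (Set.Ioo 0 vt) (fun t => (1-t)^c) t := by
    intro t ht
    simp only [Set.mem_Ioi] at ht
    by_cases hlt : t < vt
    · have hset : {a : Fin c → ℝ | t < F a} = Set.pi Set.univ (fun _ => Set.Ioi t) := by
        ext x
        simp only [Set.mem_setOf_eq, hF, Finset.lt_inf'_iff, Finset.mem_univ, true_implies,
          lt_min_iff, Set.mem_pi, Set.mem_univ, Set.mem_Ioi, true_implies]
        constructor
        · exact fun h i => (h i).1
        · exact fun h i => ⟨h i, hlt⟩
      rw [hset, Measure.pi_pi]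
      have hone : (volume.restrict (Set.Icc (0:ℝ) 1)) (Set.Ioi t) = ENNReal.ofReal (1 - t) := by
        rw [Measure.restrict_apply measurableSet_Ioi]
        have : Set.Ioi t ∩ Set.Icc (0:ℝ) 1 = Set.Ioc t 1 := by
          ext y
          simp only [Set.mem_inter_iff, Set.mem_Ioi, Set.mem_Icc, Set.mem_Ioc]
          constructor
          · rintro ⟨h1, _, h3⟩; exact ⟨h1, h3⟩
          · rintro ⟨h1, h2⟩; exact ⟨h1, le_of_lt (lt_trans ht h1), h2⟩
        rw [this, Real.volume_Ioc]
      rw [Finset.prod_const, hone, Finset.card_univ, Fintype.card_fin, ← ENNReal.ofReal_pow (by linarith),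
        ENNReal.toReal_ofReal (pow_nonneg (by linarith) c)]
      rw [Set.indicator_of_mem (Set.mem_Ioo.2 ⟨ht, hlt⟩)]
    · have hset : {a : Fin c → ℝ | t < F a} = ∅ := by
        ext x
        simp only [Set.mem_setOf_eq, Set.mem_empty_iff_false, iff_false, not_lt, hF]
        push_neg at hlt
        calc Finset.univ.inf' hne (fun i => min (x i) vt) ≤ min (x ⟨0, hc⟩) vt :=
              Finset.inf'_le _ (Finset.mem_univ _)
          _ ≤ vt := min_le_right _ _
          _ ≤ t := hlt
      rw [hset, measure_empty, ENNReal.toReal_zero,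
        Set.indicator_of_notMem (fun hmem => absurd hmem.2 (not_lt.2 (not_lt.1 hlt)))]
  rw [setIntegral_congr_fun measurableSet_Ioi (fun t ht => (measureReal_def _ _).trans (htail t ht)), integral_indicator measurableSet_Ioo,
    Measure.restrict_restrict measurableSet_Ioo]
  have hinter : Set.Ioo 0 vt ∩ Set.Ioi 0 = Set.Ioo 0 vt := by
    ext y; simp only [Set.mem_inter_iff, Set.mem_Ioo, Set.mem_Ioi]; tauto
  rw [hinter, ← integral_Ioc_eq_integral_Ioo, ← intervalIntegral.integral_of_le hvt0]
  have hsub : ∀ t : ℝ, (1 - t)^c = (fun y : ℝ => y ^ c) (1 - t) := fun t => rfl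
  calc (∫ t in (0:ℝ)..vt, (1-t)^c)
      = ∫ t in (1 - vt)..(1 - 0), (fun y : ℝ => y ^ c) t := by
        rw [← intervalIntegral.integral_comp_sub_left (fun y : ℝ => y ^ c) 1]
    _ = (1 - (1 - vt) ^ (c + 1)) / (c + 1) := by
        rw [sub_zero, integral_pow]
        norm_num
end

section
/- For all v ∈ (0,1] and all integers c ≥ 1, the expected reduction under the 'smallest' policy with c points is at least the expected reduction with a single point: v − (1 − (1−v)^{c+1})/(c+1) ≥ v²/2. -/
lemma smallest_aux (v : ℝ) (hv0 : 0 < v) (hv1 : v ≤ 1) :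
    ∀ n : ℕ, 2 ≤ n → (1 - v) ^ n + n * v - n * (v ^ 2 / 2) ≥ 1 := by
  intro n hn
  induction n, hn using Nat.le_induction with
  | base => push_cast; nlinarith
  | succ n hn ih =>
    have hu0 : (0:ℝ) ≤ 1 - v := by linarith
    have hu1 : (1:ℝ) - v ≤ 1 := by linarith
    have hle : (1 - v) ^ n ≤ (1 - v) ^ 1 :=
      pow_le_pow_of_le_one hu0 hu1 (by omega)
    have hp : (1 - v) ^ (n + 1) = (1 - v) ^ n * (1 - v) := pow_succ _ _
    push_cast
    push_cast at ih
    nlinarith [pow_nonneg hu0 n]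

/-- for `v ∈ (0,1]` and integers `c ≥ 1`, the expected reduction
under the "smallest" policy with `c` points dominates the single-point one:
`v − (1 − (1−v)^{c+1})/(c+1) ≥ v²/2`. -/
theorem smallest_policy_reduction_ge (v : ℝ) (hv : v ∈ Set.Ioc (0 : ℝ) 1)
    (c : ℕ) (hc : 1 ≤ c) :
    v - (1 - (1 - v) ^ (c + 1)) / (c + 1) ≥ v ^ 2 / 2 := by
  obtain ⟨hv0, hv1⟩ := hv
  have key := smallest_aux v hv0 hv1 (c + 1) (by omega)
  push_cast at key
  have hN : (0:ℝ) < (c:ℝ) + 1 := by positivity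
  rw [ge_iff_le, le_sub_comm, div_le_iff₀ hN]
  nlinarith
end

section
/- Water-filling lemma: Let c ≥ 1, t ≥ 1 be integers, m > 0 a real, and let W : [c] → ℝ≥0 satisfy Σ_j W(j) = (t−1)·m. Then there exist nonnegative reals w(1),...,w(c) with Σ_j w(j) = m such that for every j with w(j) > 0, W(j) + w(j) ≤ t·m/c. -/
/-- water-filling lemma: given cumulative weights `W` on the `c`
components summing to `(t−1)·m`, one can distribute an extra total mass `m`
without pushing any incremented component above `t·m/c`. -/
theorem water_filling (c t : ℕ) (hc : 1 ≤ c) (ht : 1 ≤ t) (m : ℝ) (hm : 0 < m)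
    (W : Fin c → ℝ) (hW : ∀ j, 0 ≤ W j) (hsum : ∑ j, W j = ((t : ℝ) - 1) * m) :
    ∃ w : Fin c → ℝ, (∀ j, 0 ≤ w j) ∧ (∑ j, w j = m) ∧
      ∀ j, 0 < w j → W j + w j ≤ t * m / c := by
  have hc0 : (0:ℝ) < c := by exact_mod_cast hc
  set T : ℝ := t * m / c with hT
  set f : Fin c → ℝ := fun j => max 0 (T - W j) with hf
  have hf0 : ∀ j, 0 ≤ f j := fun j => le_max_left _ _
  have hS : m ≤ ∑ j, f j := by
    have h1 : ∑ j, (T - W j) ≤ ∑ j, f j :=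
      Finset.sum_le_sum fun j _ => le_max_right _ _
    have h2 : ∑ j : Fin c, (T - W j) = m := by
      rw [Finset.sum_sub_distrib, Finset.sum_const, hsum]
      simp only [Finset.card_univ, Fintype.card_fin, nsmul_eq_mul, hT]
      field_simp
      ring
    linarith
  set S : ℝ := ∑ j, f j with hSdef
  have hSpos : 0 < S := lt_of_lt_of_le hm hS
  refine ⟨fun j => (m / S) * f j, ?_, ?_, ?_⟩
  · intro j
    exact mul_nonneg (div_nonneg hm.le hSpos.le) (hf0 j)
  · rw [← Finset.mul_sum, ← hSdef, div_mul_cancel₀ _ hSpos.ne']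
  · intro j hj
    have hfj : 0 < f j := by
      by_contra h
      push_neg at h
      have : f j = 0 := le_antisymm h (hf0 j)
      simp [this] at hj
    have hle : (m / S) * f j ≤ f j := by
      have : m / S ≤ 1 := (div_le_one hSpos).2 hS
      nlinarith
    have hfval : f j = T - W j := by
      have : 0 < T - W j := by
        by_contra h
        push_neg at h
        simp only [hf, max_eq_left h] at hfj
        exact lt_irrefl 0 hfj
      simp [hf, max_eq_right this.le]
    linarith [hle, hfval ▸ hle]
end

section
/- In the repeated-single-query example, if the expert always corrects the largest mislabeled point and the learner always adopts the largest consistent threshold, then after t < c rounds the learner's threshold is (c−t)/c, and hence at least c/2 rounds are required to bring the threshold (and component error) below 1/2. -/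
open scoped Classical

/-- repeated single query `(1/c, 2/c, …, 1)`, target threshold 0,
learner starts at threshold 1.  Each round the expert corrects the largest
mislabeled point (the largest point `≤` the current threshold) and the learner
adopts the largest consistent threshold.  Then after `t < c` rounds the
threshold is `(c−t)/c`, and whenever fewer than `c/2` rounds have elapsed both
the threshold and the component error are still at least `1/2`. -/
theorem repeated_query_slow_convergence
    (c : ℕ) (hc : 0 < c) (v : ℕ → ℝ)
    (hv0 : v 0 = 1)
    (hrec : ∀ t, v (t + 1) =
      sSup {x : ℝ | ∃ j ∈ Finset.Icc 1 c, x = (j : ℝ) / c ∧ x ≤ v t}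
        - 1 / c) :
    (∀ t < c, v t = ((c : ℝ) - t) / c) ∧
    ∀ t : ℕ, (t : ℝ) < (c : ℝ) / 2 →
      1 / 2 ≤ v t ∧
      1 / 2 ≤ ((1 : ℝ) / c) *
        ((Finset.Icc 1 c).filter (fun j : ℕ => (j : ℝ) / c ≤ v t)).card := by
  have hc0 : (0 : ℝ) < (c : ℝ) := by exact_mod_cast hc
  have key : ∀ t, t < c → v t = ((c : ℝ) - t) / c := by
    intro t
    induction t with
    | zero =>
      intro _
      simp [hv0, div_self hc0.ne']
    | succ t ih =>
      intro ht
      have ht' : t < c := Nat.lt_of_succ_lt ht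
      have hvt := ih ht'
      have hsup : sSup {x : ℝ | ∃ j ∈ Finset.Icc 1 c, x = (j : ℝ) / c ∧ x ≤ v t}
          = ((c : ℝ) - t) / c := by
        apply IsGreatest.csSup_eq
        constructor
        · refine ⟨c - t, ?_, ?_, le_of_eq hvt.symm⟩
          · simp only [Finset.mem_Icc]; omega
          · rw [Nat.cast_sub ht'.le]
        · intro x hx
          obtain ⟨j, _, _, hxle⟩ := hx
          exact hvt ▸ hxle
      rw [hrec t, hsup]
      push_cast
      ring
  refine ⟨key, ?_⟩
  intro t ht2
  have htc : t < c := by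
    have : (t : ℝ) < c := by linarith
    exact_mod_cast this
  have hvt := key t htc
  have hct : (c : ℝ) / 2 ≤ (c : ℝ) - t := by linarith
  have h1 : (1 : ℝ) / 2 ≤ v t := by
    rw [hvt, le_div_iff₀ hc0]
    linarith
  refine ⟨h1, ?_⟩
  have hfilter : (Finset.Icc 1 c).filter (fun j : ℕ => (j : ℝ) / c ≤ v t)
      = Finset.Icc 1 (c - t) := by
    ext j
    simp only [Finset.mem_filter, Finset.mem_Icc, hvt]
    constructor
    · rintro ⟨⟨h1j, h2j⟩, hle⟩
      rw [div_le_div_iff_of_pos_right hc0] at hle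
      constructor
      · exact h1j
      · have : (j : ℝ) ≤ (c : ℝ) - t := hle
        have : (j : ℝ) ≤ ((c - t : ℕ) : ℝ) := by rw [Nat.cast_sub htc.le]; exact this
        exact_mod_cast this
    · rintro ⟨h1j, h2j⟩
      have hjle : (j : ℝ) ≤ ((c - t : ℕ) : ℝ) := by exact_mod_cast h2j
      rw [Nat.cast_sub htc.le] at hjle
      refine ⟨⟨h1j, by omega⟩, ?_⟩
      rw [div_le_div_iff_of_pos_right hc0]
      exact hjle
  rw [hfilter]
  have hcard : (Finset.Icc 1 (c - t)).card = c - t := by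
    rw [Nat.card_Icc]; omega
  rw [hcard]
  have heq : ((c - t : ℕ) : ℝ) = (c : ℝ) - t := by rw [Nat.cast_sub htc.le]
  rw [heq, div_mul_eq_mul_div, one_mul, le_div_iff₀ hc0]
  linarith
end
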